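/- If A is a c̃-commutative Frobenius algebra in a monoidal category with right duality, then A is also c̃-cocommutative: c̃ ∘ Δ = Δ. -/

import Mathlib

open CategoryTheory MonoidalCategory

section AuxiliaryLemmasForStmt5


variable {C : Type*} [Category C] [MonoidalCategory C]
variable {A : C} 

-- inverse of c is also "commutative"
lemma aux_inv_mul (m : A ⊗ A ⟶ A) (c : A ⊗ A ⟶ A ⊗ A) [IsIso c]
    (hcomm : c ≫ m = m) : inv c ≫ m = m := by
  rw [IsIso.inv_comp_eq]; exact hcomm.symm

-- CE' : counit compatibility
lemma aux_CE' (m : A ⊗ A ⟶ A) (η : 𝟙_ C ⟶ A) (ε : A ⟶ 𝟙_ C) (c : A ⊗ A ⟶ A ⊗ A)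
    (one_mul : (η ▷ A) ≫ m = (λ_ A).hom)
    (mul_one : (A ◁ η) ≫ m = (ρ_ A).hom)
    (hfunc : ∀ f g : A ⟶ A, (f ⊗ₘ g) ≫ c = c ≫ (g ⊗ₘ f))
    (hcomm : c ≫ m = m) :
    c ≫ (A ◁ ε) ≫ (ρ_ A).hom = (ε ▷ A) ≫ (λ_ A).hom := by
  have h := hfunc (ε ≫ η) (𝟙 A)
  rw [tensorHom_id, id_tensorHom] at h
  have h2 : (((ε ≫ η) ▷ A) ≫ c) ≫ m = (c ≫ (A ◁ (ε ≫ η))) ≫ m := by rw [h]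
  simp only [Category.assoc, hcomm, comp_whiskerRight,
    MonoidalCategory.whiskerLeft_comp] at h2
  rw [one_mul, mul_one] at h2
  exact h2.symm

-- P1 : left counit law for Δ ≫ c
lemma aux_P1 (m : A ⊗ A ⟶ A) (η : 𝟙_ C ⟶ A) (Δ : A ⟶ A ⊗ A) (ε : A ⟶ 𝟙_ C)
    (c : A ⊗ A ⟶ A ⊗ A)
    (one_mul : (η ▷ A) ≫ m = (λ_ A).hom)
    (counit_right : Δ ≫ (A ◁ ε) = (ρ_ A).inv)
    (hcη₁ : (ρ_ A).inv ≫ (A ◁ η) ≫ c = (λ_ A).inv ≫ (η ▷ A))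
    (hfunc : ∀ f g : A ⟶ A, (f ⊗ₘ g) ≫ c = c ≫ (g ⊗ₘ f)) :
    Δ ≫ c ≫ (ε ▷ A) ≫ (λ_ A).hom = 𝟙 A := by
  have h := hfunc (𝟙 A) (ε ≫ η)
  rw [id_tensorHom, tensorHom_id] at h
  calc Δ ≫ c ≫ (ε ▷ A) ≫ (λ_ A).hom
      = Δ ≫ c ≫ (ε ▷ A) ≫ (η ▷ A) ≫ m := by rw [one_mul]
    _ = Δ ≫ (c ≫ ((ε ≫ η) ▷ A)) ≫ m := by
        simp only [comp_whiskerRight, Category.assoc]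
    _ = Δ ≫ ((A ◁ (ε ≫ η)) ≫ c) ≫ m := by rw [h]
    _ = (Δ ≫ (A ◁ ε)) ≫ (A ◁ η) ≫ c ≫ m := by
        simp only [MonoidalCategory.whiskerLeft_comp, Category.assoc]
    _ = ((ρ_ A).inv ≫ (A ◁ η) ≫ c) ≫ m := by rw [counit_right]; simp only [Category.assoc]
    _ = ((λ_ A).inv ≫ (η ▷ A)) ≫ m := by rw [hcη₁]
    _ = (λ_ A).inv ≫ (λ_ A).hom := by simp only [Category.assoc, one_mul]
    _ = 𝟙 A := (λ_ A).inv_hom_id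

-- hexagon for the inverse, first form
lemma aux_hc1i (m : A ⊗ A ⟶ A) (c : A ⊗ A ⟶ A ⊗ A) [IsIso c]
    (hc₂ : (A ◁ c) ≫ (α_ A A A).inv ≫ (c ▷ A) ≫ (α_ A A A).hom ≫ (A ◁ m)
            = (α_ A A A).inv ≫ (m ▷ A) ≫ c) :
    (inv c ▷ A) ≫ (α_ A A A).hom ≫ (A ◁ inv c) ≫ (α_ A A A).inv ≫ (m ▷ A)
      = (α_ A A A).hom ≫ (A ◁ m) ≫ inv c := by
  have hmc : (m ▷ A) ≫ c = (α_ A A A).hom ≫ (A ◁ c) ≫ (α_ A A A).inv ≫ (c ▷ A)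
      ≫ (α_ A A A).hom ≫ (A ◁ m) := by
    rw [hc₂]; simp
  rw [← cancel_epi (c ▷ A), ← cancel_mono c]
  simp only [Category.assoc]
  rw [hmc]
  simp

-- hexagon for the inverse, second form
lemma aux_hc2i (m : A ⊗ A ⟶ A) (c : A ⊗ A ⟶ A ⊗ A) [IsIso c]
    (hc₁ : (c ▷ A) ≫ (α_ A A A).hom ≫ (A ◁ c) ≫ (α_ A A A).inv ≫ (m ▷ A)
            = (α_ A A A).hom ≫ (A ◁ m) ≫ c) :
    (A ◁ inv c) ≫ (α_ A A A).inv ≫ (inv c ▷ A) ≫ (α_ A A A).hom ≫ (A ◁ m)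
      = (α_ A A A).inv ≫ (m ▷ A) ≫ inv c := by
  have hmc : (A ◁ m) ≫ c = (α_ A A A).inv ≫ (c ▷ A) ≫ (α_ A A A).hom ≫ (A ◁ c)
      ≫ (α_ A A A).inv ≫ (m ▷ A) := by
    rw [hc₁]; simp
  rw [← cancel_epi (A ◁ c), ← cancel_mono c]
  simp only [Category.assoc]
  rw [hmc]
  simp

-- D1 form of Δ
lemma aux_D1 (m : A ⊗ A ⟶ A) (η : 𝟙_ C ⟶ A) (Δ : A ⟶ A ⊗ A)
    (one_mul : (η ▷ A) ≫ m = (λ_ A).hom)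
    (frob₁ : (Δ ▷ A) ≫ (α_ A A A).hom ≫ (A ◁ m) = m ≫ Δ) :
    (λ_ A).inv ≫ ((η ≫ Δ) ▷ A) ≫ (α_ A A A).hom ≫ (A ◁ m) = Δ := by
  rw [comp_whiskerRight]
  simp only [Category.assoc]
  rw [frob₁]
  slice_lhs 2 3 => rw [one_mul]
  simp

-- D2 form of Δ
lemma aux_D2 (m : A ⊗ A ⟶ A) (η : 𝟙_ C ⟶ A) (Δ : A ⟶ A ⊗ A)
    (mul_one : (A ◁ η) ≫ m = (ρ_ A).hom)
    (frob₂ : (A ◁ Δ) ≫ (α_ A A A).inv ≫ (m ▷ A) = m ≫ Δ) :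
    (ρ_ A).inv ≫ (A ◁ (η ≫ Δ)) ≫ (α_ A A A).inv ≫ (m ▷ A) = Δ := by
  rw [MonoidalCategory.whiskerLeft_comp]
  simp only [Category.assoc]
  rw [frob₂]
  slice_lhs 2 3 => rw [mul_one]
  simp


-- zig-zag 1
lemma aux_zig1 (m : A ⊗ A ⟶ A) (η : 𝟙_ C ⟶ A) (Δ : A ⟶ A ⊗ A) (ε : A ⟶ 𝟙_ C)
    (one_mul : (η ▷ A) ≫ m = (λ_ A).hom)
    (counit_right : Δ ≫ (A ◁ ε) = (ρ_ A).inv)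
    (frob₁ : (Δ ▷ A) ≫ (α_ A A A).hom ≫ (A ◁ m) = m ≫ Δ) :
    (λ_ A).inv ≫ ((η ≫ Δ) ▷ A) ≫ (α_ A A A).hom ≫ (A ◁ m) ≫ (A ◁ ε) ≫ (ρ_ A).hom
      = 𝟙 A := by
  have d1 := aux_D1 m η Δ one_mul frob₁
  calc (λ_ A).inv ≫ ((η ≫ Δ) ▷ A) ≫ (α_ A A A).hom ≫ (A ◁ m) ≫ (A ◁ ε) ≫ (ρ_ A).hom
      = ((λ_ A).inv ≫ ((η ≫ Δ) ▷ A) ≫ (α_ A A A).hom ≫ (A ◁ m)) ≫ (A ◁ ε) ≫ (ρ_ A).hom := by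
        simp only [Category.assoc]
    _ = (Δ ≫ (A ◁ ε)) ≫ (ρ_ A).hom := by rw [d1]; simp only [Category.assoc]
    _ = 𝟙 A := by rw [counit_right]; simp

-- zig-zag 2
lemma aux_zig2 (m : A ⊗ A ⟶ A) (η : 𝟙_ C ⟶ A) (Δ : A ⟶ A ⊗ A) (ε : A ⟶ 𝟙_ C)
    (mul_one : (A ◁ η) ≫ m = (ρ_ A).hom)
    (counit_left : Δ ≫ (ε ▷ A) = (λ_ A).inv)
    (frob₂ : (A ◁ Δ) ≫ (α_ A A A).inv ≫ (m ▷ A) = m ≫ Δ) :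
    (ρ_ A).inv ≫ (A ◁ (η ≫ Δ)) ≫ (α_ A A A).inv ≫ (m ▷ A) ≫ (ε ▷ A) ≫ (λ_ A).hom
      = 𝟙 A := by
  have d2 := aux_D2 m η Δ mul_one frob₂
  calc (ρ_ A).inv ≫ (A ◁ (η ≫ Δ)) ≫ (α_ A A A).inv ≫ (m ▷ A) ≫ (ε ▷ A) ≫ (λ_ A).hom
      = ((ρ_ A).inv ≫ (A ◁ (η ≫ Δ)) ≫ (α_ A A A).inv ≫ (m ▷ A)) ≫ (ε ▷ A) ≫ (λ_ A).hom := by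
        simp only [Category.assoc]
    _ = (Δ ≫ (ε ▷ A)) ≫ (λ_ A).hom := by rw [d2]; simp only [Category.assoc]
    _ = 𝟙 A := by rw [counit_left]; simp

-- DA : move c through the right multiplication
lemma aux_DA (m : A ⊗ A ⟶ A) (c : A ⊗ A ⟶ A ⊗ A) [IsIso c]
    (hc₂ : (A ◁ c) ≫ (α_ A A A).inv ≫ (c ▷ A) ≫ (α_ A A A).hom ≫ (A ◁ m)
            = (α_ A A A).inv ≫ (m ▷ A) ≫ c) :
    (c ▷ A) ≫ (α_ A A A).hom ≫ (A ◁ m)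
      = (α_ A A A).hom ≫ (A ◁ inv c) ≫ (α_ A A A).inv ≫ (m ▷ A) ≫ c := by
  have hc1i := aux_hc1i m c hc₂
  rw [← cancel_mono (inv c)]
  simp only [Category.assoc, IsIso.hom_inv_id, Category.comp_id]
  rw [← hc1i]
  simp

-- DD : decomposition of (m ▷ A) ≫ inv c
lemma aux_DD (m : A ⊗ A ⟶ A) (c : A ⊗ A ⟶ A ⊗ A) [IsIso c]
    (hc₁ : (c ▷ A) ≫ (α_ A A A).hom ≫ (A ◁ c) ≫ (α_ A A A).inv ≫ (m ▷ A)
            = (α_ A A A).hom ≫ (A ◁ m) ≫ c) :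
    (m ▷ A) ≫ inv c
      = (α_ A A A).hom ≫ (A ◁ inv c) ≫ (α_ A A A).inv ≫ (inv c ▷ A)
          ≫ (α_ A A A).hom ≫ (A ◁ m) := by
  have hc2i := aux_hc2i m c hc₁
  calc (m ▷ A) ≫ inv c
      = (α_ A A A).hom ≫ ((α_ A A A).inv ≫ (m ▷ A) ≫ inv c) := by simp
    _ = (α_ A A A).hom ≫ (A ◁ inv c) ≫ (α_ A A A).inv ≫ (inv c ▷ A)
          ≫ (α_ A A A).hom ≫ (A ◁ m) := by rw [← hc2i]

-- STAR : slide an endomorphism through c using commutativity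
lemma aux_star (m : A ⊗ A ⟶ A) (c : A ⊗ A ⟶ A ⊗ A) [IsIso c]
    (hfunc : ∀ f g : A ⟶ A, (f ⊗ₘ g) ≫ c = c ≫ (g ⊗ₘ f))
    (hcomm : c ≫ m = m) (f : A ⟶ A) :
    inv c ≫ (f ▷ A) ≫ m = (A ◁ f) ≫ m := by
  have h := hfunc f (𝟙 A)
  rw [tensorHom_id, id_tensorHom] at h
  calc inv c ≫ (f ▷ A) ≫ m
      = inv c ≫ (f ▷ A) ≫ c ≫ m := by rw [hcomm]
    _ = inv c ≫ c ≫ (A ◁ f) ≫ m := by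
        rw [← Category.assoc (f ▷ A) c m, h]; simp only [Category.assoc]
    _ = (A ◁ f) ≫ m := by simp only [IsIso.inv_hom_id_assoc]


-- FORM1
lemma aux_FORM1 (m : A ⊗ A ⟶ A) (η : 𝟙_ C ⟶ A) (Δ : A ⟶ A ⊗ A) (ε : A ⟶ 𝟙_ C)
    (c : A ⊗ A ⟶ A ⊗ A) [IsIso c]
    (one_mul : (η ▷ A) ≫ m = (λ_ A).hom)
    (mul_one : (A ◁ η) ≫ m = (ρ_ A).hom)
    (hc₂ : (A ◁ c) ≫ (α_ A A A).inv ≫ (c ▷ A) ≫ (α_ A A A).hom ≫ (A ◁ m)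
            = (α_ A A A).inv ≫ (m ▷ A) ≫ c)
    (hfunc : ∀ f g : A ⟶ A, (f ⊗ₘ g) ≫ c = c ≫ (g ⊗ₘ f))
    (hcomm : c ≫ m = m) :
    ((Δ ≫ c) ▷ A) ≫ (α_ A A A).hom ≫ (A ◁ m) ≫ (A ◁ ε) ≫ (ρ_ A).hom
      = (Δ ▷ A) ≫ (α_ A A A).hom ≫ (A ◁ inv c) ≫ (α_ A A A).inv ≫ (m ▷ A)
          ≫ (ε ▷ A) ≫ (λ_ A).hom := by
  have hCE := aux_CE' m η ε c one_mul mul_one hfunc hcomm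
  have hDA := aux_DA m c hc₂
  rw [comp_whiskerRight]
  slice_lhs 2 4 => rw [hDA]
  simp only [Category.assoc]
  slice_lhs 6 8 => rw [hCE]

-- head lemma
lemma aux_HEAD (e : 𝟙_ C ⟶ A ⊗ A) (d : A ⊗ A ⟶ A ⊗ A) :
    d ≫ ((λ_ A).inv ▷ A) ≫ ((e ▷ A) ▷ A)
      = ((λ_ A).inv ▷ A) ≫ ((e ▷ A) ▷ A) ≫ (α_ (A ⊗ A) A A).hom
          ≫ ((A ⊗ A) ◁ d) ≫ (α_ (A ⊗ A) A A).inv := by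
  have h1 : ((λ_ A).inv ▷ A) ≫ ((e ▷ A) ▷ A)
      = (λ_ (A ⊗ A)).inv ≫ (e ▷ (A ⊗ A)) ≫ (α_ (A ⊗ A) A A).inv := by monoidal
  calc d ≫ ((λ_ A).inv ▷ A) ≫ ((e ▷ A) ▷ A)
      = d ≫ (λ_ (A ⊗ A)).inv ≫ (e ▷ (A ⊗ A)) ≫ (α_ (A ⊗ A) A A).inv := by rw [h1]
    _ = (λ_ (A ⊗ A)).inv ≫ ((𝟙_ C) ◁ d) ≫ (e ▷ (A ⊗ A)) ≫ (α_ (A ⊗ A) A A).inv := by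
        rw [leftUnitor_inv_naturality_assoc]
    _ = (λ_ (A ⊗ A)).inv ≫ (e ▷ (A ⊗ A)) ≫ ((A ⊗ A) ◁ d) ≫ (α_ (A ⊗ A) A A).inv := by
        rw [whisker_exchange_assoc]
    _ = ((λ_ A).inv ▷ A) ≫ ((e ▷ A) ▷ A) ≫ (α_ (A ⊗ A) A A).hom
          ≫ ((A ⊗ A) ◁ d) ≫ (α_ (A ⊗ A) A A).inv := by
        slice_rhs 1 2 => rw [h1]
        simp only [Category.assoc, Iso.inv_hom_id_assoc]

-- exchange lemma
lemma aux_EXC (m : A ⊗ A ⟶ A) (p : A ⊗ A ⟶ 𝟙_ C) :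
    ((A ⊗ A) ◁ m) ≫ (p ▷ A) ≫ (λ_ A).hom
      = (p ▷ (A ⊗ A)) ≫ (λ_ (A ⊗ A)).hom ≫ m := by
  rw [← Category.assoc, whisker_exchange]
  simp only [Category.assoc]
  rw [leftUnitor_naturality]

-- tail exchange lemma
lemma aux_TAILEQ (m : A ⊗ A ⟶ A) (p : A ⊗ A ⟶ 𝟙_ C) :
    ((α_ A A A).inv ▷ A) ≫ ((p ▷ A) ▷ A) ≫ ((λ_ A).hom ▷ A) ≫ m
      = (α_ A (A ⊗ A) A).hom ≫ (A ◁ (α_ A A A).hom) ≫ (A ◁ (A ◁ m))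
          ≫ (α_ A A A).inv ≫ (p ▷ A) ≫ (λ_ A).hom := by
  have e1 := aux_EXC m p
  calc ((α_ A A A).inv ▷ A) ≫ ((p ▷ A) ▷ A) ≫ ((λ_ A).hom ▷ A) ≫ m
      = ((α_ A A A).inv ▷ A) ≫ (α_ (A ⊗ A) A A).hom ≫ (p ▷ (A ⊗ A))
          ≫ (λ_ (A ⊗ A)).hom ≫ m := by monoidal
    _ = ((α_ A A A).inv ▷ A) ≫ (α_ (A ⊗ A) A A).hom ≫ ((A ⊗ A) ◁ m)
          ≫ (p ▷ A) ≫ (λ_ A).hom := by rw [← e1]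
    _ = (α_ A (A ⊗ A) A).hom ≫ (A ◁ (α_ A A A).hom) ≫ (A ◁ (A ◁ m))
          ≫ (α_ A A A).inv ≫ (p ▷ A) ≫ (λ_ A).hom := by monoidal


-- the big pasting lemma
lemma aux_KEY0 (m : A ⊗ A ⟶ A) (ε : A ⟶ 𝟙_ C) (c : A ⊗ A ⟶ A ⊗ A) [IsIso c]
    (hc₁ : (c ▷ A) ≫ (α_ A A A).hom ≫ (A ◁ c) ≫ (α_ A A A).inv ≫ (m ▷ A)
            = (α_ A A A).hom ≫ (A ◁ m) ≫ c)
    (e : 𝟙_ C ⟶ A ⊗ A) :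
    (((λ_ A).inv ≫ (e ▷ A) ≫ (α_ A A A).hom ≫ (A ◁ m)) ▷ A) ≫ (α_ A A A).hom
        ≫ (A ◁ inv c) ≫ (α_ A A A).inv ≫ (m ▷ A) ≫ (ε ▷ A) ≫ (λ_ A).hom
      = inv c ≫ (((λ_ A).inv ≫ (e ▷ A) ≫ (α_ A A A).hom ≫ (A ◁ inv c)
            ≫ (α_ A A A).inv ≫ (m ▷ A) ≫ (ε ▷ A) ≫ (λ_ A).hom) ▷ A) ≫ m := by
  have hDD := aux_DD m c hc₁
  -- transform the left hand side
  have hL : (((λ_ A).inv ≫ (e ▷ A) ≫ (α_ A A A).hom ≫ (A ◁ m)) ▷ A) ≫ (α_ A A A).hom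
        ≫ (A ◁ inv c) ≫ (α_ A A A).inv ≫ (m ▷ A) ≫ (ε ▷ A) ≫ (λ_ A).hom
      = ((λ_ A).inv ▷ A) ≫ ((e ▷ A) ▷ A) ≫ ((α_ A A A).hom ▷ A)
          ≫ (α_ A (A ⊗ A) A).hom ≫ (A ◁ (α_ A A A).hom) ≫ (A ◁ (A ◁ inv c))
          ≫ (A ◁ (α_ A A A).inv) ≫ (A ◁ (inv c ▷ A)) ≫ (A ◁ (α_ A A A).hom)
          ≫ (A ◁ (A ◁ m))
          ≫ (α_ A A A).inv ≫ (m ▷ A) ≫ (ε ▷ A) ≫ (λ_ A).hom := by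
    simp only [comp_whiskerRight, Category.assoc]
    slice_lhs 4 5 => rw [associator_naturality_middle]
    slice_lhs 5 6 => rw [← MonoidalCategory.whiskerLeft_comp, hDD]
    simp only [MonoidalCategory.whiskerLeft_comp, Category.assoc]
  rw [hL]
  -- transform the right hand side
  have hR : inv c ≫ (((λ_ A).inv ≫ (e ▷ A) ≫ (α_ A A A).hom ≫ (A ◁ inv c)
            ≫ (α_ A A A).inv ≫ (m ▷ A) ≫ (ε ▷ A) ≫ (λ_ A).hom) ▷ A) ≫ m
      = ((λ_ A).inv ▷ A) ≫ ((e ▷ A) ▷ A) ≫ (α_ (A ⊗ A) A A).hom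
          ≫ ((A ⊗ A) ◁ inv c) ≫ (α_ (A ⊗ A) A A).inv
          ≫ ((α_ A A A).hom ▷ A) ≫ ((A ◁ inv c) ▷ A)
          ≫ (α_ A (A ⊗ A) A).hom ≫ (A ◁ (α_ A A A).hom) ≫ (A ◁ (A ◁ m))
          ≫ (α_ A A A).inv ≫ ((m ≫ ε) ▷ A) ≫ (λ_ A).hom := by
    simp only [comp_whiskerRight, Category.assoc]
    slice_lhs 1 3 => rw [aux_HEAD]
    simp only [Category.assoc]
    -- now fuse (m ▷ A ▷ A) ≫ (ε ▷ A ▷ A) into ((m ≫ ε) ▷ A) ▷ A and apply TAILEQ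
    slice_lhs 9 10 => rw [← comp_whiskerRight, ← comp_whiskerRight]
    slice_lhs 8 11 => rw [aux_TAILEQ]
    simp only [comp_whiskerRight, Category.assoc]
  rw [hR]
  -- both sides now have the same sequence of atoms
  simp only [comp_whiskerRight, Category.assoc]
  monoidal


-- recovery lemma (injectivity of the pairing probe)
lemma aux_REC (m : A ⊗ A ⟶ A) (ε : A ⟶ 𝟙_ C) (e : 𝟙_ C ⟶ A ⊗ A) (f : A ⟶ A ⊗ A)
    (hz : (ρ_ A).inv ≫ (A ◁ e) ≫ (α_ A A A).inv ≫ (m ▷ A) ≫ (ε ▷ A) ≫ (λ_ A).hom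
            = 𝟙 A) :
    (ρ_ A).inv ≫ (A ◁ e) ≫ (α_ A A A).inv
        ≫ (((f ▷ A) ≫ (α_ A A A).hom ≫ (A ◁ m) ≫ (A ◁ ε) ≫ (ρ_ A).hom) ▷ A) = f := by
  simp only [comp_whiskerRight, Category.assoc]
  slice_lhs 3 4 => rw [← associator_inv_naturality_left]
  slice_lhs 2 3 => rw [whisker_exchange]
  slice_lhs 1 2 => rw [← rightUnitor_inv_naturality]
  have hbr : (ρ_ (A ⊗ A)).inv ≫ ((A ⊗ A) ◁ e) ≫ (α_ (A ⊗ A) A A).inv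
        ≫ ((α_ A A A).hom ▷ A) ≫ ((A ◁ m) ▷ A) ≫ ((A ◁ ε) ▷ A) ≫ ((ρ_ A).hom ▷ A)
      = A ◁ ((ρ_ A).inv ≫ (A ◁ e) ≫ (α_ A A A).inv ≫ (m ▷ A) ≫ (ε ▷ A) ≫ (λ_ A).hom) := by
    monoidal
  simp only [Category.assoc]
  rw [hbr, hz]
  simp

-- the dual recovery identity
lemma aux_IDENT (m : A ⊗ A ⟶ A) (ε : A ⟶ 𝟙_ C) (e φ : 𝟙_ C ⟶ A ⊗ A)
    (hz : (λ_ A).inv ≫ (e ▷ A) ≫ (α_ A A A).hom ≫ (A ◁ m) ≫ (A ◁ ε) ≫ (ρ_ A).hom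
            = 𝟙 A) :
    e ≫ (A ◁ ((ρ_ A).inv ≫ (A ◁ φ) ≫ (α_ A A A).inv ≫ (m ▷ A) ≫ (ε ▷ A)
          ≫ (λ_ A).hom)) = φ := by
  simp only [MonoidalCategory.whiskerLeft_comp, Category.assoc]
  have hx : (A ◁ (ρ_ A).inv) ≫ (A ◁ (A ◁ φ))
      = (ρ_ (A ⊗ A)).inv ≫ ((A ⊗ A) ◁ φ) ≫ (α_ A A (A ⊗ A)).hom := by monoidal
  slice_lhs 2 3 => rw [hx]
  simp only [Category.assoc]
  slice_lhs 1 2 => rw [rightUnitor_inv_naturality]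
  slice_lhs 2 3 => rw [← whisker_exchange]
  slice_lhs 1 2 => rw [← unitors_inv_equal, ← leftUnitor_inv_naturality]
  have hbr : (λ_ (A ⊗ A)).inv ≫ (e ▷ (A ⊗ A)) ≫ (α_ A A (A ⊗ A)).hom
        ≫ (A ◁ (α_ A A A).inv) ≫ (A ◁ (m ▷ A)) ≫ (A ◁ (ε ▷ A)) ≫ (A ◁ (λ_ A).hom)
      = ((λ_ A).inv ≫ (e ▷ A) ≫ (α_ A A A).hom ≫ (A ◁ m) ≫ (A ◁ ε) ≫ (ρ_ A).hom) ▷ A := by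
    monoidal
  simp only [Category.assoc]
  rw [hbr, hz]
  simp

end AuxiliaryLemmasForStmt5

/-- A `c̃`-commutative Frobenius algebra in a monoidal category with right duality
is also `c̃`-cocommutative: `c̃ ∘ Δ = Δ`. -/
theorem stmt5 {C : Type*} [Category C] [MonoidalCategory C]
    (A Av : C) (b : 𝟙_ C ⟶ A ⊗ Av) (d : Av ⊗ A ⟶ 𝟙_ C)
    -- zig-zag identities of the right duality
    (zig : (λ_ A).inv ≫ (b ▷ A) ≫ (α_ A Av A).hom ≫ (A ◁ d) ≫ (ρ_ A).hom = 𝟙 A)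
    (zag : (ρ_ Av).inv ≫ (Av ◁ b) ≫ (α_ Av A Av).inv ≫ (d ▷ Av) ≫ (λ_ Av).hom = 𝟙 Av)
    (m : A ⊗ A ⟶ A) (η : 𝟙_ C ⟶ A) (Δ : A ⟶ A ⊗ A) (ε : A ⟶ 𝟙_ C)
    (mul_assoc : (m ▷ A) ≫ m = (α_ A A A).hom ≫ (A ◁ m) ≫ m)
    (one_mul : (η ▷ A) ≫ m = (λ_ A).hom)
    (mul_one : (A ◁ η) ≫ m = (ρ_ A).hom)
    (coassoc : Δ ≫ (Δ ▷ A) ≫ (α_ A A A).hom = Δ ≫ (A ◁ Δ))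
    (counit_left : Δ ≫ (ε ▷ A) = (λ_ A).inv)
    (counit_right : Δ ≫ (A ◁ ε) = (ρ_ A).inv)
    (frob₁ : (Δ ▷ A) ≫ (α_ A A A).hom ≫ (A ◁ m) = m ≫ Δ)
    (frob₂ : (A ◁ Δ) ≫ (α_ A A A).inv ≫ (m ▷ A) = m ≫ Δ)
    (c : A ⊗ A ⟶ A ⊗ A) [IsIso c]
    -- compatibility of `c̃` with the product
    (hc₁ : (c ▷ A) ≫ (α_ A A A).hom ≫ (A ◁ c) ≫ (α_ A A A).inv ≫ (m ▷ A)
            = (α_ A A A).hom ≫ (A ◁ m) ≫ c)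
    (hc₂ : (A ◁ c) ≫ (α_ A A A).inv ≫ (c ▷ A) ≫ (α_ A A A).hom ≫ (A ◁ m)
            = (α_ A A A).inv ≫ (m ▷ A) ≫ c)
    -- compatibility of `c̃` with the unit
    (hcη₁ : (ρ_ A).inv ≫ (A ◁ η) ≫ c = (λ_ A).inv ≫ (η ▷ A))
    (hcη₂ : (λ_ A).inv ≫ (η ▷ A) ≫ c = (ρ_ A).inv ≫ (A ◁ η))
    -- functoriality of `c̃`
    (hfunc : ∀ f g : A ⟶ A, (f ⊗ₘ g) ≫ c = c ≫ (g ⊗ₘ f))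
    -- `c̃`-commutativity
    (hcomm : c ≫ m = m) :
    Δ ≫ c = Δ := by
  have hD1 := aux_D1 m η Δ one_mul frob₁
  have hD2 := aux_D2 m η Δ mul_one frob₂
  have hzig1 := aux_zig1 m η Δ ε one_mul counit_right frob₁
  have hzig2 := aux_zig2 m η Δ ε mul_one counit_left frob₂
  have hP1 := aux_P1 m η Δ ε c one_mul counit_right hcη₁ hfunc
  set ω : A ⟶ A := (λ_ A).inv ≫ ((η ≫ Δ) ▷ A) ≫ (α_ A A A).hom ≫ (A ◁ inv c)
      ≫ (α_ A A A).inv ≫ (m ▷ A) ≫ (ε ▷ A) ≫ (λ_ A).hom with hω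
  have hKEY : ((Δ ≫ c) ▷ A) ≫ (α_ A A A).hom ≫ (A ◁ m) ≫ (A ◁ ε) ≫ (ρ_ A).hom
      = (A ◁ ω) ≫ m := by
    have h0 := aux_KEY0 m ε c hc₁ (η ≫ Δ)
    rw [hD1] at h0
    rw [aux_FORM1 m η Δ ε c one_mul mul_one hc₂ hfunc hcomm, h0, hω]
    exact aux_star m c hfunc hcomm _
  have hREC := aux_REC m ε (η ≫ Δ) (Δ ≫ c) hzig2
  have hSUB : Δ ≫ c = (ρ_ A).inv ≫ (A ◁ ((η ≫ Δ) ≫ (ω ▷ A))) ≫ (α_ A A A).inv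
      ≫ (m ▷ A) := by
    rw [← hREC, hKEY]
    simp only [comp_whiskerRight, MonoidalCategory.whiskerLeft_comp, Category.assoc]
    slice_lhs 4 5 => rw [← associator_inv_naturality_middle]
    simp only [Category.assoc]
  have hGE : (ρ_ A).inv ≫ (A ◁ ((η ≫ Δ) ≫ (ω ▷ A))) ≫ (α_ A A A).inv ≫ (m ▷ A)
      ≫ (ε ▷ A) ≫ (λ_ A).hom = 𝟙 A := by
    calc (ρ_ A).inv ≫ (A ◁ ((η ≫ Δ) ≫ (ω ▷ A))) ≫ (α_ A A A).inv ≫ (m ▷ A)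
        ≫ (ε ▷ A) ≫ (λ_ A).hom
        = ((ρ_ A).inv ≫ (A ◁ ((η ≫ Δ) ≫ (ω ▷ A))) ≫ (α_ A A A).inv ≫ (m ▷ A))
            ≫ (ε ▷ A) ≫ (λ_ A).hom := by simp only [Category.assoc]
      _ = (Δ ≫ c) ≫ (ε ▷ A) ≫ (λ_ A).hom := by rw [← hSUB]
      _ = 𝟙 A := by simp only [Category.assoc]; exact hP1
  have hID := aux_IDENT m ε (η ≫ Δ) ((η ≫ Δ) ≫ (ω ▷ A)) hzig1
  have hEE : (η ≫ Δ) ≫ (ω ▷ A) = η ≫ Δ := by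
    rw [← hID, hGE]
    simp
  rw [hSUB, hEE, hD2]
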